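/- Fix L_b > 0, h_o > 0 and positive integers M_o < M_b. Assume that whenever condition (i) L̃_o²M_o > L̃_{b/o}²M_b holds, condition (iii) L̃_{b/o}²M_b − L̃_o²M_o > 4L̃_{b/o}²L̃_o²(M_o − M_b) also holds. Then the bound η of Theorem th_diffusion_bound, viewed as a function of L_o, has a unique minimum, attained at the L_o satisfying L_o√(2M_o − 1) = L_b√(2M_b − 1), i.e., when the Stein length-scales ρ_o = L_o√(2M_o−1) and ρ_b = L_b√(2M_b−1) are equal. -/

import Mathlib

noncomputable def gg (Lb : ℝ) (Mb Mo : ℕ) (x : ℝ) : ℝ :=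
  x ^ (2*Mb - 1) / (x^2 - Lb^2) ^ (Mb - Mo)

lemma hasDerivAt_gg {Lb : ℝ} {Mb Mo : ℕ} (hMoMb : Mo < Mb)
    {x : ℝ} (hx : x^2 - Lb^2 ≠ 0) :
    HasDerivAt (gg Lb Mb Mo)
      ((x ^ (2*Mb - 2) * (x^2 - Lb^2)^(Mb - Mo - 1) *
        ((2*(Mo:ℝ) - 1) * x^2 - (2*(Mb:ℝ) - 1) * Lb^2))
        / ((x^2 - Lb^2)^(Mb - Mo))^2) x := by
  obtain ⟨k, hk⟩ : ∃ k, 2*Mb - 1 = k + 1 := ⟨2*Mb - 2, by omega⟩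
  obtain ⟨j, hj⟩ : ∃ j, Mb - Mo = j + 1 := ⟨Mb - Mo - 1, by omega⟩
  have hk2 : 2*Mb = k + 2 := by omega
  have hm : Mb = Mo + (j + 1) := by omega
  have ck : 2*(Mb:ℝ) = (k:ℝ) + 2 := by exact_mod_cast congrArg (Nat.cast (R := ℝ)) hk2
  have cm : (Mb:ℝ) = (Mo:ℝ) + ((j:ℝ) + 1) := by exact_mod_cast congrArg (Nat.cast (R := ℝ)) hm
  have hnum : HasDerivAt (fun x : ℝ => x ^ (2*Mb - 1)) (((2*Mb - 1 : ℕ):ℝ) * x ^ (2*Mb - 2)) x := by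
    have := hasDerivAt_pow (2*Mb - 1) x
    simpa [show 2*Mb - 1 - 1 = 2*Mb - 2 from by omega] using this
  have hden : HasDerivAt (fun x : ℝ => (x^2 - Lb^2) ^ (Mb - Mo))
      (((Mb - Mo : ℕ):ℝ) * (x^2 - Lb^2) ^ (Mb - Mo - 1) * (2*x)) x := by
    have h1 : HasDerivAt (fun x : ℝ => x^2 - Lb^2) (2*x) x := by
      simpa using (hasDerivAt_pow 2 x).sub_const (Lb^2)
    exact h1.pow (Mb - Mo)
  have hdd : (x^2 - Lb^2) ^ (Mb - Mo) ≠ 0 := pow_ne_zero _ hx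
  have H := hnum.div hden hdd
  refine H.congr_deriv ?_
  have hek : 2*Mb - 2 = k := by omega
  have hj1 : Mb - Mo - 1 = j := by omega
  have e1 : ((2*Mb - 1 : ℕ):ℝ) = (k:ℝ) + 1 := by rw [hk]; push_cast; ring
  have e2 : ((Mb - Mo : ℕ):ℝ) = (j:ℝ) + 1 := by rw [hj]; push_cast; ring
  have e3 : 2*(Mo:ℝ) - 1 = (k:ℝ) - 2*j - 1 := by linarith
  have e4 : 2*(Mb:ℝ) - 1 = (k:ℝ) + 1 := by linarith
  rw [e1, e2, e3, e4, hk, hj, hek]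
  simp only [Nat.add_sub_cancel]
  rw [div_eq_div_iff (by positivity) (by positivity)]
  ring

lemma branch1_eq (c : ℝ) {Lb ho : ℝ} {Mb Mo : ℕ} (hho : 0 < ho) (hLb : 0 < Lb)
    (hMoMb : Mo < Mb) {Lo : ℝ} (hLo : Lb < Lo) :
    (c / Lo) * ((Lo / ho) ^ 2 / Mb) ^ Mb * ((Mo : ℝ) / (Lb / ho) ^ 2) ^ Mo *
      (((Mb : ℝ) - (Mo : ℝ)) / ((Lo / ho) ^ 2 - (Lb / ho) ^ 2)) ^ (Mb - Mo)
    = c * ((Mo:ℝ)^Mo * ((Mb:ℝ)-(Mo:ℝ))^(Mb-Mo) / ((Mb:ℝ)^Mb * Lb^(2*Mo))) *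
        gg Lb Mb Mo Lo := by
  obtain ⟨q, rfl⟩ : ∃ q, Mb = Mo + (q + 1) := ⟨Mb - Mo - 1, by omega⟩
  obtain ⟨n, hn⟩ : ∃ n, 2*(Mo + (q+1)) - 1 = n + 1 := ⟨2*(Mo+(q+1)) - 2, by omega⟩
  have hLo0 : 0 < Lo := lt_trans hLb hLo
  have hd : 0 < Lo^2 - Lb^2 := by nlinarith
  have hsub : Mo + (q+1) - Mo = q + 1 := by omega
  rw [gg, hsub, hn]
  have h1 : (Lo / ho) ^ 2 = Lo^2/ho^2 := div_pow Lo ho 2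
  have h2 : (Lb / ho) ^ 2 = Lb^2/ho^2 := div_pow Lb ho 2
  have h3 : (Lo / ho) ^ 2 - (Lb / ho) ^ 2 = (Lo^2 - Lb^2)/ho^2 := by
    rw [h1, h2, div_sub_div_same]
  rw [h3, h1, h2]
  rw [div_div, div_div_eq_mul_div, div_div_eq_mul_div]
  rw [div_pow, div_pow, div_pow, mul_pow, mul_pow, mul_pow]
  have e1 : (Lo^2)^(Mo + (q+1)) = Lo^(n+1) * Lo := by
    rw [← pow_mul, ← pow_succ]; congr 1; omega
  have e2 : (ho^2)^(Mo + (q+1)) = (ho^2)^Mo * (ho^2)^(q+1) := pow_add _ _ _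
  have e3 : Lb^(2*Mo) = (Lb^2)^Mo := pow_mul Lb 2 Mo
  rw [e1, e2, e3]
  have p1 : ((ho:ℝ)^2)^Mo ≠ 0 := by positivity
  have p2 : ((ho:ℝ)^2)^(q+1) ≠ 0 := by positivity
  have p3 : ((Lb:ℝ)^2)^Mo ≠ 0 := by positivity
  have p4 : ((Lo:ℝ)^2 - Lb^2)^(q+1) ≠ 0 := by positivity
  have p5 : (((Mo + (q+1) : ℕ)):ℝ)^(Mo+(q+1)) ≠ 0 := by positivity
  have p6 : Lo ≠ 0 := ne_of_gt hLo0
  generalize ((ho:ℝ)^2)^Mo = a1 at p1 ⊢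
  generalize ((ho:ℝ)^2)^(q+1) = a2 at p2 ⊢
  generalize ((Lb:ℝ)^2)^Mo = a3 at p3 ⊢
  generalize ((Lo:ℝ)^2 - Lb^2)^(q+1) = a4 at p4 ⊢
  generalize (((Mo + (q+1) : ℕ)):ℝ)^(Mo+(q+1)) = a5 at p5 ⊢
  generalize ((Mo:ℝ))^Mo = a6
  generalize (((Mo + (q+1) : ℕ):ℝ) - (Mo:ℝ))^(q+1) = a7
  generalize (Lo:ℝ)^(n+1) = a8
  field_simp

lemma boundary_eq {Lb : ℝ} {Mb Mo : ℕ} (hLb : 0 < Lb) (hMo : 0 < Mo) (hMoMb : Mo < Mb)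
    {xb : ℝ} (hxb : 0 < xb) (hxb2 : xb^2 * Mo = Lb^2 * Mb) :
    ((Mo:ℝ)^Mo * ((Mb:ℝ)-(Mo:ℝ))^(Mb-Mo) / ((Mb:ℝ)^Mb * Lb^(2*Mo))) * gg Lb Mb Mo xb
      = 1 / xb := by
  obtain ⟨q, rfl⟩ : ∃ q, Mb = Mo + (q + 1) := ⟨Mb - Mo - 1, by omega⟩
  obtain ⟨n, hn⟩ : ∃ n, 2*(Mo + (q+1)) - 1 = n + 1 := ⟨2*(Mo+(q+1)) - 2, by omega⟩
  have hsub : Mo + (q+1) - Mo = q + 1 := by omega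
  have hmo : (0:ℝ) < (Mo:ℝ) := by exact_mod_cast hMo
  have hcast : ((Mo + (q+1) : ℕ):ℝ) = (Mo:ℝ) + ((q:ℝ)+1) := by push_cast; ring
  have hx2 : xb^2 = Lb^2 * ((Mo + (q+1) : ℕ):ℝ) / Mo := by
    field_simp at hxb2 ⊢; linarith
  have hdiff : xb^2 - Lb^2 = Lb^2 * (((Mo + (q+1) : ℕ):ℝ) - Mo) / Mo := by
    rw [hx2]; field_simp
  rw [gg, hsub, hn]
  rw [eq_div_iff (ne_of_gt hxb)]
  have e1 : xb^(n+1) / (xb^2 - Lb^2)^(q+1) * xb = (xb^2)^(Mo + (q+1)) / (xb^2 - Lb^2)^(q+1) := by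
    rw [div_mul_eq_mul_div, ← pow_succ, ← pow_mul]
    congr 2
    omega
  rw [mul_assoc, e1, hdiff, hx2]
  rw [div_pow, div_pow, mul_pow, mul_pow]
  have e2 : ((Lb:ℝ)^2)^(Mo + (q+1)) = (Lb^2)^Mo * (Lb^2)^(q+1) := pow_add _ _ _
  have e3 : ((Mo:ℝ))^(Mo + (q+1)) = (Mo:ℝ)^Mo * (Mo:ℝ)^(q+1) := pow_add _ _ _
  have e4 : Lb^(2*Mo) = (Lb^2)^Mo := pow_mul Lb 2 Mo
  rw [e2, e3, e4]
  have p1 : ((Lb:ℝ)^2)^Mo ≠ 0 := by positivity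
  have p2 : ((Lb:ℝ)^2)^(q+1) ≠ 0 := by positivity
  have p3 : ((Mo:ℝ))^Mo ≠ 0 := by positivity
  have p4 : ((Mo:ℝ))^(q+1) ≠ 0 := by positivity
  have p5 : (((Mo + (q+1) : ℕ)):ℝ)^(Mo+(q+1)) ≠ 0 := by positivity
  have hP : (0:ℝ) < ((Mo + (q+1) : ℕ):ℝ) - Mo := by rw [hcast]; linarith
  have p6 : ((((Mo + (q+1) : ℕ)):ℝ) - (Mo:ℝ))^(q+1) ≠ 0 := by positivity
  generalize ((Lb:ℝ)^2)^Mo = a1 at p1 ⊢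
  generalize ((Lb:ℝ)^2)^(q+1) = a2 at p2 ⊢
  generalize ((Mo:ℝ))^Mo = a3 at p3 ⊢
  generalize ((Mo:ℝ))^(q+1) = a4 at p4 ⊢
  generalize (((Mo + (q+1) : ℕ)):ℝ)^(Mo+(q+1)) = a5 at p5 ⊢
  generalize ((((Mo + (q+1) : ℕ)):ℝ) - (Mo:ℝ))^(q+1) = a6 at p6 ⊢
  field_simp

lemma gg_contOn {Lb : ℝ} {Mb Mo : ℕ} (hLb : 0 < Lb) {s : Set ℝ}
    (hs : ∀ x ∈ s, Lb < x) : ContinuousOn (gg Lb Mb Mo) s := by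
  apply ContinuousOn.div (by fun_prop) (by fun_prop)
  intro x hx
  have h := hs x hx
  have : 0 < x^2 - Lb^2 := by nlinarith
  positivity

lemma gg_anti {Lb : ℝ} {Mb Mo : ℕ} (hLb : 0 < Lb) (hMo : 0 < Mo) (hMoMb : Mo < Mb)
    {x₀ : ℝ} (hx₀ : Lb < x₀)
    (hsq : x₀^2 * (2*(Mo:ℝ) - 1) = Lb^2 * (2*(Mb:ℝ) - 1)) :
    StrictAntiOn (gg Lb Mb Mo) (Set.Ioc Lb x₀) := by
  apply strictAntiOn_of_deriv_neg (convex_Ioc _ _)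
      (gg_contOn hLb (fun x hx => hx.1))
  intro x hx
  rw [interior_Ioc] at hx
  obtain ⟨hx1, hx2⟩ := hx
  have hx0 : 0 < x := lt_trans hLb hx1
  have hd : 0 < x^2 - Lb^2 := by nlinarith
  have hmo1 : (1:ℝ) ≤ (Mo:ℝ) := by exact_mod_cast hMo
  rw [(hasDerivAt_gg hMoMb (ne_of_gt hd)).deriv]
  apply div_neg_of_neg_of_pos
  · apply mul_neg_of_pos_of_neg (by positivity)
    have hlt : x^2 < x₀^2 := by nlinarith
    have h2 : (0:ℝ) < 2*(Mo:ℝ) - 1 := by linarith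
    nlinarith [mul_lt_mul_of_pos_left hlt h2]
  · positivity

lemma gg_mono {Lb : ℝ} {Mb Mo : ℕ} (hLb : 0 < Lb) (hMo : 0 < Mo) (hMoMb : Mo < Mb)
    {x₀ : ℝ} (hx₀ : Lb < x₀)
    (hsq : x₀^2 * (2*(Mo:ℝ) - 1) = Lb^2 * (2*(Mb:ℝ) - 1)) :
    StrictMonoOn (gg Lb Mb Mo) (Set.Ici x₀) := by
  apply strictMonoOn_of_deriv_pos (convex_Ici _)
      (gg_contOn hLb (fun x hx => lt_of_lt_of_le hx₀ hx))
  intro x hx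
  rw [interior_Ici] at hx
  have hx1 : Lb < x := lt_trans hx₀ hx
  have hx0 : 0 < x := lt_trans hLb hx1
  have hd : 0 < x^2 - Lb^2 := by nlinarith
  have hmo1 : (1:ℝ) ≤ (Mo:ℝ) := by exact_mod_cast hMo
  rw [(hasDerivAt_gg hMoMb (ne_of_gt hd)).deriv]
  apply div_pos
  · apply mul_pos (by positivity)
    have hxx : x₀ < x := hx
    have hlt : x₀^2 < x^2 := by nlinarith [lt_trans hLb hx₀]
    have h2 : (0:ℝ) < 2*(Mo:ℝ) - 1 := by linarith
    nlinarith [mul_lt_mul_of_pos_left hlt h2]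
  · positivity

lemma cond_iff {ho a b : ℝ} (hho : 0 < ho) (m n : ℝ) :
    (a/ho)^2 * m > (b/ho)^2 * n ↔ a^2*m > b^2*n := by
  rw [div_pow, div_pow, div_mul_eq_mul_div, div_mul_eq_mul_div, gt_iff_lt,
    div_lt_div_iff₀ (by positivity) (by positivity), gt_iff_lt]
  constructor <;> intro h <;> nlinarith [pow_pos hho 2]


open Classical in
/-- The two-branch condition-number bound `η` of Theorem `th_diffusion_bound`,
viewed as a function of `L_o`, with `L̃_o = L_o/h_o`, `L̃_{b/o} = L_b/h_o` and
`α(L_o) = c/L_o` where `c > 0` collects the fixed constants `σ_b²ν_b L_b/(σ_o²ν_o)`. -/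
noncomputable def eta (c Lb ho : ℝ) (Mb Mo : ℕ) (Lo : ℝ) : ℝ :=
  if (Lo / ho) ^ 2 * Mo > (Lb / ho) ^ 2 * Mb ∧ Mo < Mb ∧
      (Lb / ho) ^ 2 * Mb - (Lo / ho) ^ 2 * Mo >
        4 * (Lb / ho) ^ 2 * (Lo / ho) ^ 2 * ((Mo : ℝ) - (Mb : ℝ)) then
    1 + (c / Lo) * ((Lo / ho) ^ 2 / Mb) ^ Mb * ((Mo : ℝ) / (Lb / ho) ^ 2) ^ Mo *
      (((Mb : ℝ) - (Mo : ℝ)) / ((Lo / ho) ^ 2 - (Lb / ho) ^ 2)) ^ (Mb - Mo)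
  else
    1 + (c / Lo) * max ((1 + 4 * (Lo / ho) ^ 2) ^ Mo / (1 + 4 * (Lb / ho) ^ 2) ^ Mb) 1

/-- For fixed `L_b, h_o > 0` and orders `M_o < M_b`, assuming that
condition (iii) holds whenever condition (i) does, the bound `η` as a function of
`L_o > 0` has a unique minimum, attained at the `L_o` with equal Stein
length-scales: `L_o √(2M_o-1) = L_b √(2M_b-1)`. -/
theorem stmt14 (c Lb ho : ℝ) (hc : 0 < c) (hLb : 0 < Lb) (hho : 0 < ho)
    (Mo Mb : ℕ) (hMo : 0 < Mo) (hMoMb : Mo < Mb)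
    (hImp : ∀ Lo : ℝ, 0 < Lo →
      (Lo / ho) ^ 2 * Mo > (Lb / ho) ^ 2 * Mb →
      (Lb / ho) ^ 2 * Mb - (Lo / ho) ^ 2 * Mo >
        4 * (Lb / ho) ^ 2 * (Lo / ho) ^ 2 * ((Mo : ℝ) - (Mb : ℝ))) :
    ∀ x₀ : ℝ, 0 < x₀ →
      x₀ * Real.sqrt (2 * Mo - 1) = Lb * Real.sqrt (2 * Mb - 1) →
      ∀ y : ℝ, 0 < y → y ≠ x₀ →
        eta c Lb ho Mb Mo x₀ < eta c Lb ho Mb Mo y := by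
  intro x₀ hx₀pos hx₀eq y hypos hyne
  have hmo0 : (0:ℝ) < (Mo:ℝ) := by exact_mod_cast hMo
  have hmo1 : (1:ℝ) ≤ (Mo:ℝ) := by exact_mod_cast hMo
  have hmbmo : (Mo:ℝ) < (Mb:ℝ) := by exact_mod_cast hMoMb
  have hmb0 : (0:ℝ) < (Mb:ℝ) := lt_trans hmo0 hmbmo
  have h2mo : (0:ℝ) < 2*(Mo:ℝ) - 1 := by linarith
  have h2mb : (0:ℝ) < 2*(Mb:ℝ) - 1 := by linarith
  -- squared relation for x₀
  have hsq : x₀^2 * (2*(Mo:ℝ) - 1) = Lb^2 * (2*(Mb:ℝ) - 1) := by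
    have h := congrArg (fun t : ℝ => t^2) hx₀eq
    simp only [mul_pow] at h
    rwa [Real.sq_sqrt (by linarith), Real.sq_sqrt (by linarith)] at h
  have hx₀Lb : Lb < x₀ := by
    have h1 : Lb^2 < x₀^2 := by nlinarith [pow_pos hLb 2]
    nlinarith
  -- the constant K
  obtain ⟨K, hKdef⟩ : ∃ K : ℝ, K = (Mo:ℝ)^Mo * ((Mb:ℝ)-(Mo:ℝ))^(Mb-Mo) / ((Mb:ℝ)^Mb * Lb^(2*Mo)) :=
    ⟨_, rfl⟩
  have hK : 0 < K := hKdef ▸ div_pos (mul_pos (pow_pos hmo0 _) (pow_pos (by linarith) _))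
    (mul_pos (pow_pos hmb0 _) (pow_pos hLb _))
  -- branch-1 condition holds at x₀
  have hbr : x₀^2 * (Mo:ℝ) > Lb^2 * (Mb:ℝ) := by
    have key : (x₀^2*(Mo:ℝ) - Lb^2*(Mb:ℝ)) * (2*(Mo:ℝ)-1) = Lb^2*((Mb:ℝ)-(Mo:ℝ)) := by
      linear_combination (Mo:ℝ) * hsq
    nlinarith [mul_pos (pow_pos hLb 2) (show (0:ℝ) < (Mb:ℝ)-(Mo:ℝ) by linarith)]
  have hcondx₀ : (x₀ / ho) ^ 2 * (Mo:ℝ) > (Lb / ho) ^ 2 * (Mb:ℝ) :=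
    (cond_iff hho _ _).mpr hbr
  have ex₀ : eta c Lb ho Mb Mo x₀ = 1 + c * K * gg Lb Mb Mo x₀ := by
    unfold eta
    rw [if_pos ⟨hcondx₀, hMoMb, hImp x₀ hx₀pos hcondx₀⟩,
      branch1_eq c hho hLb hMoMb hx₀Lb, ← hKdef]
  rw [ex₀]
  by_cases hy : (y / ho) ^ 2 * (Mo:ℝ) > (Lb / ho) ^ 2 * (Mb:ℝ)
  · -- y also in branch 1
    have hybr : y^2 * (Mo:ℝ) > Lb^2 * (Mb:ℝ) := (cond_iff hho _ _).mp hy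
    have hyLb : Lb < y := by
      have h1 : Lb^2 < y^2 := by nlinarith [pow_pos hLb 2]
      nlinarith
    have ey : eta c Lb ho Mb Mo y = 1 + c * K * gg Lb Mb Mo y := by
      unfold eta
      rw [if_pos ⟨hy, hMoMb, hImp y hypos hy⟩, branch1_eq c hho hLb hMoMb hyLb, ← hKdef]
    rw [ey]
    have hgg : gg Lb Mb Mo x₀ < gg Lb Mb Mo y := by
      rcases lt_or_gt_of_ne hyne with h | h
      · exact gg_anti hLb hMo hMoMb hx₀Lb hsq ⟨hyLb, le_of_lt h⟩
          ⟨hx₀Lb, le_refl _⟩ h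
      · exact gg_mono hLb hMo hMoMb hx₀Lb hsq (Set.self_mem_Ici)
          (Set.mem_Ici.mpr (le_of_lt h)) h
    have := mul_lt_mul_of_pos_left hgg (mul_pos hc hK)
    rw [mul_assoc c K, mul_assoc c K]
    linarith
  · -- y in branch 2
    have ey : eta c Lb ho Mb Mo y = 1 + (c / y) *
        max ((1 + 4 * (y / ho) ^ 2) ^ Mo / (1 + 4 * (Lb / ho) ^ 2) ^ Mb) 1 := by
      unfold eta
      rw [if_neg (by tauto)]
    obtain ⟨xb, hxbpos, hxb2'⟩ : ∃ xb : ℝ, 0 < xb ∧ xb^2 * (Mo:ℝ) = Lb^2 * (Mb:ℝ) := by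
      refine ⟨Real.sqrt (Lb^2 * Mb / Mo), Real.sqrt_pos.mpr (by positivity), ?_⟩
      rw [Real.sq_sqrt (by positivity)]
      field_simp
    have hLbxb : Lb < xb := by
      have h1 : Lb^2 < xb^2 := by
        have h0 : Lb^2 * (Mo:ℝ) < xb^2 * (Mo:ℝ) := by
          rw [hxb2']
          exact mul_lt_mul_of_pos_left hmbmo (pow_pos hLb 2)
        exact lt_of_mul_lt_mul_right h0 hmo0.le
      exact lt_of_pow_lt_pow_left₀ 2 hxbpos.le h1
    have hxbx₀ : xb < x₀ := by
      have h1 : xb^2 * ((Mo:ℝ)*(2*(Mo:ℝ)-1)) = Lb^2*(Mb:ℝ)*(2*(Mo:ℝ)-1) := by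
        linear_combination (2*(Mo:ℝ)-1) * hxb2'
      have h2 : x₀^2 * ((Mo:ℝ)*(2*(Mo:ℝ)-1)) = Lb^2*(2*(Mb:ℝ)-1)*(Mo:ℝ) := by
        linear_combination (Mo:ℝ) * hsq
      have h3 : Lb^2*(Mb:ℝ)*(2*(Mo:ℝ)-1) < Lb^2*(2*(Mb:ℝ)-1)*(Mo:ℝ) := by
        have key : Lb^2*(2*(Mb:ℝ)-1)*(Mo:ℝ) - Lb^2*(Mb:ℝ)*(2*(Mo:ℝ)-1)
            = Lb^2*((Mb:ℝ)-(Mo:ℝ)) := by ring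
        have hpos := mul_pos (pow_pos hLb 2) (show (0:ℝ) < (Mb:ℝ)-(Mo:ℝ) by linarith)
        linarith
      have h4 : xb^2 < x₀^2 := by
        have hP : (0:ℝ) < (Mo:ℝ)*(2*(Mo:ℝ)-1) := by positivity
        have := h1.trans_lt (h3.trans_eq h2.symm)
        exact lt_of_mul_lt_mul_right this hP.le
      exact lt_of_pow_lt_pow_left₀ 2 hx₀pos.le h4
    have hyxb : y ≤ xb := by
      have h1 : ¬ (y^2 * (Mo:ℝ) > Lb^2 * (Mb:ℝ)) := fun h => hy ((cond_iff hho _ _).mpr h)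
      push_neg at h1
      have h2 : y^2 ≤ xb^2 := by
        have := h1.trans_eq hxb2'.symm
        exact le_of_mul_le_mul_right this hmo0
      exact le_of_pow_le_pow_left₀ (by norm_num) hxbpos.le h2
    have hggxb : gg Lb Mb Mo x₀ < gg Lb Mb Mo xb :=
      gg_anti hLb hMo hMoMb hx₀Lb hsq ⟨hLbxb, le_of_lt hxbx₀⟩ ⟨hx₀Lb, le_refl _⟩ hxbx₀
    have hbd : c * K * gg Lb Mb Mo xb = c / xb := by
      rw [hKdef, mul_assoc, boundary_eq hLb hMo hMoMb hxbpos hxb2', mul_one_div]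
    have step1 : 1 + c * K * gg Lb Mb Mo x₀ < 1 + c / xb := by
      rw [← hbd]
      have := mul_lt_mul_of_pos_left hggxb (mul_pos hc hK)
      rw [mul_assoc c K, mul_assoc c K]
      linarith
    have step2 : c / xb ≤ c / y := by gcongr
    have step3 : c / y ≤ (c / y) *
        max ((1 + 4 * (y / ho) ^ 2) ^ Mo / (1 + 4 * (Lb / ho) ^ 2) ^ Mb) 1 :=
      le_mul_of_one_le_right (by positivity) (le_max_right _ 1)
    rw [ey]
    linarith
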